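/- arXiv:2010.01573 — 3 statements merged into one kernel-verified Lean document; each statement's English description precedes it below -/
import Mathlib

section
/- Let M₁,…,M_d be topological monoids such that for each k, every WOT-continuous contraction-valued semigroup homomorphism M_k → B(H) is SOT-continuous. Then every WOT-continuous contraction-valued semigroup homomorphism T : ∏ₖ M_k → B(H) is SOT-continuous. -/
open Filter Topology

/-- If `A t` are contractions, SOT-continuous, and `g` is continuous, then `t ↦ A t (g t)`
is continuous. -/
lemma aux_comp {H : Type*} [NormedAddCommGroup H] [NormedSpace ℂ H]
    {α : Type*} [TopologicalSpace α]
    (A : α → H →L[ℂ] H) (hA : ∀ t, ‖A t‖ ≤ 1) (hAc : ∀ ξ : H, Continuous fun t => A t ξ)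
    {g : α → H} (hg : Continuous g) : Continuous fun t => A t (g t) := by
  rw [continuous_iff_continuousAt]
  intro t₀
  have hbound : ∀ t, ‖A t (g t - g t₀)‖ ≤ ‖g t - g t₀‖ := by
    intro t
    calc ‖A t (g t - g t₀)‖ ≤ ‖A t‖ * ‖g t - g t₀‖ := (A t).le_opNorm _
      _ ≤ 1 * ‖g t - g t₀‖ := mul_le_mul_of_nonneg_right (hA t) (norm_nonneg _)
      _ = ‖g t - g t₀‖ := one_mul _
  have htend : Tendsto (fun t => ‖g t - g t₀‖) (𝓝 t₀) (𝓝 0) := by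
    simpa using (((hg.sub (continuous_const (y := g t₀)))).norm.tendsto t₀)
  have h1 : Tendsto (fun t => A t (g t - g t₀)) (𝓝 t₀) (𝓝 0) :=
    squeeze_zero_norm hbound htend
  have h2 : Tendsto (fun t => A t (g t₀)) (𝓝 t₀) (𝓝 (A t₀ (g t₀))) :=
    (hAc (g t₀)).tendsto t₀
  have key : Tendsto (fun t => A t (g t - g t₀) + A t (g t₀)) (𝓝 t₀)
      (𝓝 (0 + A t₀ (g t₀))) := h1.add h2
  rw [zero_add] at key
  refine key.congr (fun t => ?_)
  rw [map_sub]; abel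

/-- SOT continuity of a list product of contraction families. -/
lemma aux_prod {H : Type*} [NormedAddCommGroup H] [NormedSpace ℂ H]
    {α : Type*} [TopologicalSpace α]
    (l : List (α → H →L[ℂ] H))
    (hA : ∀ A ∈ l, ∀ t, ‖A t‖ ≤ 1)
    (hAc : ∀ A ∈ l, ∀ ξ : H, Continuous fun t => A t ξ) :
    ∀ ξ : H, Continuous fun t => (l.map (fun A => A t)).prod ξ := by
  induction l with
  | nil => intro ξ; simpa using continuous_const
  | cons A l ih =>
      intro ξ
      have hcont : Continuous fun t => (l.map (fun B => B t)).prod ξ :=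
        ih (fun B hB => hA B (List.mem_cons_of_mem _ hB))
          (fun B hB => hAc B (List.mem_cons_of_mem _ hB)) ξ
      have := aux_comp A (hA A List.mem_cons_self) (hAc A List.mem_cons_self) hcont
      simpa [ContinuousLinearMap.mul_apply] using this

lemma list_prod_single {d : ℕ} {β : Type*} [Monoid β] (l : List (Fin d)) (hl : l.Nodup)
    (j : Fin d) (hj : j ∈ l) (g : Fin d → β) (h1 : ∀ k, k ≠ j → g k = 1) :
    (l.map g).prod = g j := by
  induction l with
  | nil => simp at hj
  | cons a l ih =>
      rcases List.nodup_cons.mp hl with ⟨ha, hl'⟩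
      by_cases haj : a = j
      · subst haj
        have : ∀ k ∈ l, g k = 1 := fun k hk => h1 k (fun h => ha (h ▸ hk))
        have hprod : (l.map g).prod = 1 := List.prod_eq_one (by
          intro x hx
          rcases List.mem_map.mp hx with ⟨k, hk, rfl⟩
          exact this k hk)
        simp [hprod]
      · have hj' : j ∈ l := by
          rcases List.mem_cons.mp hj with h | h
          · exact absurd h.symm haj
          · exact h
        simp [h1 a haj, ih hl' hj']

theorem stmt9 {H : Type*} [NormedAddCommGroup H] [InnerProductSpace ℂ H] [CompleteSpace H]
    [TopologicalSpace.SeparableSpace H]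
    {d : ℕ} (M : Fin d → Type*) [∀ k, Monoid (M k)] [∀ k, TopologicalSpace (M k)]
    (hgood : ∀ k, ∀ T : M k → H →L[ℂ] H,
      T 1 = 1 → (∀ s t, T (s * t) = T s * T t) → (∀ t, ‖T t‖ ≤ 1) →
      (∀ ξ η : H, Continuous fun t => (inner ℂ (T t ξ) η : ℂ)) →
      ∀ ξ : H, Continuous fun t => T t ξ) :
    ∀ T : (∀ k, M k) → H →L[ℂ] H,
      T 1 = 1 → (∀ s t, T (s * t) = T s * T t) → (∀ t, ‖T t‖ ≤ 1) →
      (∀ ξ η : H, Continuous fun t => (inner ℂ (T t ξ) η : ℂ)) →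
      ∀ ξ : H, Continuous fun t => T t ξ := by
  intro T hT1 hTmul hTnorm hTwot ξ
  -- the coordinate semigroups
  set Tk : ∀ k : Fin d, M k → H →L[ℂ] H := fun k s => T (Pi.mulSingle k s) with hTk
  have hmulSingle_cont : ∀ k : Fin d, Continuous fun s : M k => Pi.mulSingle k s :=
    fun k => continuous_mulSingle k
  have hTk1 : ∀ k, Tk k 1 = 1 := by intro k; simp [hTk, Pi.mulSingle_one, hT1]
  have hTkmul : ∀ k s t, Tk k (s * t) = Tk k s * Tk k t := by
    intro k s t; simp only [hTk]; rw [Pi.mulSingle_mul, hTmul]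
  have hTknorm : ∀ k t, ‖Tk k t‖ ≤ 1 := fun k t => hTnorm _
  have hTkwot : ∀ k, ∀ ξ η : H, Continuous fun t => (inner ℂ (Tk k t ξ) η : ℂ) := by
    intro k ξ η
    exact (hTwot ξ η).comp (hmulSingle_cont k)
  have hTksot : ∀ k, ∀ ξ : H, Continuous fun t => Tk k t ξ := fun k =>
    hgood k (Tk k) (hTk1 k) (hTkmul k) (hTknorm k) (hTkwot k)
  -- decompose t as a list product of mulSingles
  have hdecomp : ∀ t : ∀ k, M k,
      ((List.finRange d).map (fun k => Pi.mulSingle k (t k))).prod = t := by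
    intro t
    funext j
    have := Pi.list_prod_apply j ((List.finRange d).map (fun k => Pi.mulSingle k (t k)))
    rw [this, List.map_map]
    simp only [Function.comp_def]
    exact (list_prod_single (List.finRange d) (List.nodup_finRange d) j
      (List.mem_finRange j) (fun k => Pi.mulSingle k (t k) j)
      (fun k hk => Pi.mulSingle_eq_of_ne hk.symm _)).trans (Pi.mulSingle_eq_same _ _)
  -- T of a list product is the list product of T's
  have hTlist : ∀ (l : List (Fin d)) (t : ∀ k, M k),
      T ((l.map (fun k => Pi.mulSingle k (t k))).prod)
        = (l.map (fun k => Tk k (t k))).prod := by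
    intro l t
    induction l with
    | nil => simpa using hT1
    | cons a l ih => simp [hTmul, ih, hTk]
  have hfact : ∀ t : ∀ k, M k, T t = (((List.finRange d).map (fun k => Tk k (t k)))).prod := by
    intro t
    rw [← hTlist (List.finRange d) t, hdecomp t]
  -- now apply aux_prod
  have key := aux_prod (α := ∀ k, M k)
    ((List.finRange d).map (fun k => fun t : ∀ k, M k => Tk k (t k)))
    (by
      intro A hA t
      rcases List.mem_map.mp hA with ⟨k, _, rfl⟩
      exact hTknorm k (t k))
    (by
      intro A hA η
      rcases List.mem_map.mp hA with ⟨k, _, rfl⟩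
      exact (hTksot k η).comp (continuous_apply k)) ξ
  simp only [List.map_map] at key
  have : (fun t : ∀ k, M k => T t ξ)
      = fun t : ∀ k, M k =>
        ((List.finRange d).map (((fun A : (∀ k, M k) → H →L[ℂ] H => A t)) ∘
          (fun k => fun t : ∀ k, M k => Tk k (t k)))).prod ξ := by
    funext t
    rw [hfact t]
    rfl
  rw [this]
  exact key
end

section
/- Let H be a separable infinite-dimensional Hilbert space and A a set of WOT-continuous contraction-valued functions on a topological monoid M which is closed under finite joins. Then the closure of A in the topology of uniform WOT-convergence on compact subsets of M is convex. -/
open UniformConvergence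

/-- The topology of uniform WOT-convergence on compact subsets of `M`. -/
noncomputable def kWot (M H : Type*) [TopologicalSpace M] [NormedAddCommGroup H]
    [InnerProductSpace ℂ H] : TopologicalSpace (M → H →L[ℂ] H) :=
  TopologicalSpace.induced
    (fun (T : M → H →L[ℂ] H) (p : {K : Set M // IsCompact K} × H × H) =>
      UniformFun.ofFun (fun t : (p.1 : Set M) => (inner ℂ (T t.1 p.2.1) p.2.2 : ℂ)))
    inferInstance

/-- The space of WOT-continuous contraction-valued functions on `M`. -/
def Fcw (M H : Type*) [TopologicalSpace M] [NormedAddCommGroup H] [InnerProductSpace ℂ H] :=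
  {T : M → H →L[ℂ] H //
    (∀ t, ‖T t‖ ≤ 1) ∧ ∀ ξ η : H, Continuous fun t => (inner ℂ (T t ξ) η : ℂ)}

/-- `A` is closed under finite joins. -/
def ClosedUnderFiniteJoins {M H : Type*} [TopologicalSpace M] [NormedAddCommGroup H]
    [InnerProductSpace ℂ H] [CompleteSpace H] (A : Set (Fcw M H)) : Prop :=
  ∀ (n : ℕ) (u : Fin n → H →L[ℂ] H),
    (∀ i j, ContinuousLinearMap.adjoint (u j) * u i = if i = j then 1 else 0) →
    (∑ i, u i * ContinuousLinearMap.adjoint (u i)) = 1 →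
    ∀ T : Fin n → Fcw M H, (∀ i, T i ∈ A) →
    ∀ J : Fcw M H,
      (∀ t, J.1 t = ∑ i, u i * (T i).1 t * ContinuousLinearMap.adjoint (u i)) → J ∈ A


open Submodule Set ContinuousLinearMap Topology
set_option linter.unusedSectionVars false
set_option maxHeartbeats 1600000

noncomputable section Aux
variable {H : Type*} [NormedAddCommGroup H] [InnerProductSpace ℂ H] [CompleteSpace H]


/-- An equiv `Fin d ⊕ ℕ ≃ ℕ` with `inl j ↦ j`, `inr n ↦ d + n`. -/
def finNatEquiv (d : ℕ) : (Fin d ⊕ ℕ) ≃ ℕ where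
  toFun x := Sum.elim (fun j : Fin d => (j : ℕ)) (fun n => d + n) x
  invFun m := if h : m < d then Sum.inl ⟨m, h⟩ else Sum.inr (m - d)
  left_inv x := by
    rcases x with j | n
    · simp [j.isLt]
    · simp only [Sum.elim_inr]
      split_ifs with h
      · omega
      simp
  right_inv m := by
    by_cases h : m < d
    · simp [h]
    · simp only [dif_neg h, Sum.elim_inr]; omega

theorem orthonormal_countable [TopologicalSpace.SeparableSpace H] {w : Set H}
    (hw : Orthonormal ℂ ((↑) : w → H)) : Countable w := by
  apply Pairwise.countable_of_isOpen_disjoint (s := fun x : w => Metric.ball (x : H) (1/2))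
  · intro x y hxy
    have h0 : (inner ℂ (x:H) (y:H) : ℂ) = 0 := hw.2 hxy
    have h2 : ‖(x : H) - y‖ ^ 2 = 2 := by
      rw [@norm_sub_sq ℂ, hw.1 x, hw.1 y, h0]
      norm_num
    have h3 : (1:ℝ) ≤ ‖(x : H) - y‖ := by nlinarith [norm_nonneg ((x:H) - y)]
    refine Metric.ball_disjoint_ball ?_
    rw [dist_eq_norm]; linarith
  · exact fun i => Metric.isOpen_ball
  · exact fun i => Metric.nonempty_ball.mpr (by norm_num)

set_option maxHeartbeats 1000000 in
theorem exists_adapted_basis [TopologicalSpace.SeparableSpace H]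
    (hinf : ¬ FiniteDimensional ℂ H) (s : Finset H) :
    ∃ (d : ℕ) (B : HilbertBasis ℕ ℂ H),
      ∀ x ∈ s, x ∈ Submodule.span ℂ (⇑B '' Set.Iio d) := by
  classical
  set E : Submodule ℂ H := Submodule.span ℂ (s : Set H) with hE
  haveI : FiniteDimensional ℂ E := FiniteDimensional.span_of_finite ℂ s.finite_toSet
  set d := Module.finrank ℂ E with hd
  set onb := stdOrthonormalBasis ℂ E
  set o : Fin d → H := fun j => ((onb j : E) : H) with ho
  have hoON : Orthonormal ℂ o := onb.orthonormal.comp_linearIsometry E.subtypeₗᵢ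
  have hoinj : Function.Injective o := hoON.linearIndependent.injective
  set s₀ : Set H := Set.range o with hs₀
  have hs₀ON : Orthonormal ℂ ((↑) : s₀ → H) := hoON.toSubtypeRange
  obtain ⟨w, bw, hsw, hbw⟩ := hs₀ON.exists_hilbertBasis_extension
  haveI hwc : Countable w := orthonormal_countable (hbw ▸ bw.orthonormal)
  have hwinf : w.Infinite := by
    rw [Set.infinite_coe_iff.symm]
    by_contra hfin
    rw [not_infinite_iff_finite] at hfin
    apply hinf
    have hdense := bw.dense_span
    rw [hbw, Subtype.range_coe] at hdense
    have : FiniteDimensional ℂ (Submodule.span ℂ w) :=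
      FiniteDimensional.span_of_finite ℂ (Set.finite_coe_iff.mp hfin)
    have hcl : (Submodule.span ℂ w).topologicalClosure = Submodule.span ℂ w :=
      IsClosed.submodule_topologicalClosure_eq (Submodule.closed_of_finiteDimensional _)
    rw [hcl] at hdense
    have : FiniteDimensional ℂ (⊤ : Submodule ℂ H) := hdense ▸ this
    exact Submodule.topEquiv.finiteDimensional
  -- build the reindexing equivalence
  have hs₀fin : s₀.Finite := Set.finite_range o
  have hw'inf : (w \ s₀).Infinite := hwinf.diff hs₀fin
  haveI : Infinite ↥(w \ s₀) := Set.infinite_coe_iff.mpr hw'inf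
  haveI : Countable ↥(w \ s₀) :=
    Set.Countable.to_subtype ((Set.countable_coe_iff.mp hwc).mono Set.diff_subset)
  haveI den : Denumerable ↥(w \ s₀) := (nonempty_denumerable _).some
  set e₂ : ℕ ≃ ↥(w \ s₀) := (Denumerable.eqv _).symm with he₂
  set e₁ : Fin d ≃ ↥s₀ := Equiv.ofInjective o hoinj with he₁
  set e₄ : ↥s₀ ⊕ ↥(w \ s₀) ≃ ↥w := Equiv.Set.sumDiffSubset hsw with he₄
  set e : ℕ ≃ ↥w := (finNatEquiv d).symm.trans ((e₁.sumCongr e₂).trans e₄) with he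
  set β : ℕ → H := fun n => ((e n : w) : H) with hβ
  have hwON : Orthonormal ℂ ((↑) : w → H) := hbw ▸ bw.orthonormal
  have hβON : Orthonormal ℂ β := hwON.comp e e.injective
  have hsp : ⊤ ≤ (Submodule.span ℂ (Set.range β)).topologicalClosure := by
    have hr : Set.range β = w := by
      show Set.range (Subtype.val ∘ ⇑e) = w
      rw [Set.range_comp, Equiv.range_eq_univ, Set.image_univ, Subtype.range_coe]
    rw [hr]
    have hdense := bw.dense_span
    rw [hbw, Subtype.range_coe] at hdense
    rw [hdense]
  refine ⟨d, HilbertBasis.mk hβON hsp, ?_⟩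
  have hBcoe : ⇑(HilbertBasis.mk hβON hsp) = β := HilbertBasis.coe_mk _ _
  have hkey : ∀ j : Fin d, β (j : ℕ) = o j := by
    intro j
    have h1 : (finNatEquiv d).symm (j : ℕ) = Sum.inl j := by
      apply (finNatEquiv d).injective
      simp [finNatEquiv]
    rw [hβ]
    simp only [he, Equiv.trans_apply, h1, Equiv.sumCongr_apply, Sum.map_inl, he₄]
    rw [Equiv.Set.sumDiffSubset_apply_inl]
    rfl
  have himg : s₀ ⊆ ⇑(HilbertBasis.mk hβON hsp) '' Set.Iio d := by
    rintro x ⟨j, rfl⟩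
    exact ⟨(j : ℕ), j.isLt, by rw [hBcoe, hkey]⟩
  have hEspan : E ≤ Submodule.span ℂ s₀ := by
    have : Submodule.span ℂ s₀ = E := by
      rw [hs₀]
      have : Set.range o = E.subtype '' (Set.range onb) := by
        rw [ho, ← Set.range_comp]
        rfl
      rw [this, Submodule.span_image, ← OrthonormalBasis.coe_toBasis onb,
        onb.toBasis.span_eq, Submodule.map_top, Submodule.range_subtype]
    rw [this]
  intro x hx
  exact Submodule.span_mono himg (hEspan (Submodule.subset_span hx))


local notation "⟪" x ", " y "⟫" => @inner ℂ _ _ x y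

variable (B : HilbertBasis ℕ ℂ H) (d : ℕ) (a b : ℝ)

/-- image of `B n` under the first isometry -/
def fU : ℕ → H := fun n =>
  if n < d then (Real.sqrt a : ℂ) • B n + (Real.sqrt b : ℂ) • B (d + n)
  else B (2*d + 2*(n - d))

/-- image of `B n` under the second isometry -/
def fV : ℕ → H := fun n =>
  if n < d then (Real.sqrt b : ℂ) • B n - (Real.sqrt a : ℂ) • B (d + n)
  else B (2*d + 2*(n - d) + 1)

/-- value of the adjoint of the first isometry on `B l` -/
def gU : ℕ → H := fun l =>
  if l < d then (Real.sqrt a : ℂ) • B l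
  else if l < 2*d then (Real.sqrt b : ℂ) • B (l - d)
  else if (l - 2*d) % 2 = 0 then B (d + (l - 2*d)/2) else 0

/-- value of the adjoint of the second isometry on `B l` -/
def gV : ℕ → H := fun l =>
  if l < d then (Real.sqrt b : ℂ) • B l
  else if l < 2*d then -((Real.sqrt a : ℂ) • B (l - d))
  else if (l - 2*d) % 2 = 1 then B (d + (l - 2*d)/2) else 0

variable {a b}

theorem hBo : ∀ i j : ℕ, ⟪(B i : H), B j⟫ = if i = j then 1 else 0 :=
  orthonormal_iff_ite.mp B.orthonormal

theorem innUU (ha : 0 ≤ a) (hb : 0 ≤ b) (hab : a + b = 1) (m n : ℕ) :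
    ⟪fU B d a b m, fU B d a b n⟫ = if m = n then 1 else 0 := by
  by_cases hm : m < d <;> by_cases hn : n < d <;>
    simp only [fU, if_pos, if_neg, hm, hn, if_true, if_false, ite_true, ite_false,
      inner_add_left, inner_add_right, inner_smul_left, inner_smul_right, hBo,
      Complex.conj_ofReal]
  · rw [if_neg (by omega : ¬ m = d + n), if_neg (by omega : ¬ d + m = n),
      if_congr (by omega : (d + m = d + n) ↔ (m = n)) rfl rfl]
    by_cases h : m = n <;> simp [h]
    norm_cast
    rw [Real.mul_self_sqrt ha, Real.mul_self_sqrt hb, hab]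
  · rw [if_neg (by omega : ¬ m = 2*d + 2*(n-d)), if_neg (by omega : ¬ d + m = 2*d + 2*(n-d)),
      if_neg (by omega : ¬ m = n)]
    ring
  · rw [if_neg (by omega : ¬ 2*d + 2*(m-d) = n), if_neg (by omega : ¬ 2*d + 2*(m-d) = d + n),
      if_neg (by omega : ¬ m = n)]
    ring
  · rw [if_congr (by omega : (2*d + 2*(m-d) = 2*d + 2*(n-d)) ↔ (m = n)) rfl rfl]

theorem innVV (ha : 0 ≤ a) (hb : 0 ≤ b) (hab : a + b = 1) (m n : ℕ) :
    ⟪fV B d a b m, fV B d a b n⟫ = if m = n then 1 else 0 := by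
  by_cases hm : m < d <;> by_cases hn : n < d <;>
    simp only [fV, if_pos, if_neg, hm, hn, if_true, if_false, ite_true, ite_false,
      inner_sub_left, inner_sub_right, inner_smul_left, inner_smul_right, hBo,
      Complex.conj_ofReal]
  · rw [if_neg (by omega : ¬ m = d + n), if_neg (by omega : ¬ d + m = n),
      if_congr (by omega : (d + m = d + n) ↔ (m = n)) rfl rfl]
    by_cases h : m = n <;> simp [h]
    norm_cast
    rw [Real.mul_self_sqrt ha, Real.mul_self_sqrt hb]
    linarith
  · rw [if_neg (by omega : ¬ m = 2*d + 2*(n-d) + 1), if_neg (by omega : ¬ d + m = 2*d + 2*(n-d) + 1),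
      if_neg (by omega : ¬ m = n)]
    ring
  · rw [if_neg (by omega : ¬ 2*d + 2*(m-d) + 1 = n), if_neg (by omega : ¬ 2*d + 2*(m-d) + 1 = d + n),
      if_neg (by omega : ¬ m = n)]
    ring
  · rw [if_congr (by omega : (2*d + 2*(m-d) + 1 = 2*d + 2*(n-d) + 1) ↔ (m = n)) rfl rfl]

theorem innUV (m n : ℕ) :
    ⟪fU B d a b m, fV B d a b n⟫ = 0 := by
  by_cases hm : m < d <;> by_cases hn : n < d <;>
    simp only [fU, fV, if_pos, if_neg, hm, hn, if_true, if_false, ite_true, ite_false,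
      inner_add_left, inner_sub_right, inner_smul_left, inner_smul_right, hBo,
      Complex.conj_ofReal]
  · rw [if_neg (by omega : ¬ m = d + n), if_neg (by omega : ¬ d + m = n),
      if_congr (by omega : (d + m = d + n) ↔ (m = n)) rfl rfl]
    by_cases h : m = n <;> simp [h]
    ring
  · rw [if_neg (by omega : ¬ m = 2*d + 2*(n-d) + 1), if_neg (by omega : ¬ d + m = 2*d + 2*(n-d) + 1)]
    ring
  · rw [if_neg (by omega : ¬ 2*d + 2*(m-d) = n), if_neg (by omega : ¬ 2*d + 2*(m-d) = d + n)]
    ring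
  · rw [if_neg (by omega : ¬ 2*d + 2*(m-d) = 2*d + 2*(n-d) + 1)]

theorem inn_fU_B (k l : ℕ) :
    ⟪fU B d a b k, (B l : H)⟫ = ⟪(B k : H), gU B d a b l⟫ := by
  by_cases hk : k < d <;> by_cases hl : l < d <;> by_cases hl2 : l < 2*d <;>
    by_cases hpar : (l - 2*d) % 2 = 0 <;>
    simp only [fU, gU, hk, hl, hl2, hpar, if_true, if_false, ite_true, ite_false,
      inner_add_left, inner_smul_left, inner_smul_right, inner_zero_right,
      hBo, Complex.conj_ofReal] <;>
  all_goals ((try split_ifs) <;> first | ring1 | (exfalso; omega))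

theorem inn_fV_B (k l : ℕ) :
    ⟪fV B d a b k, (B l : H)⟫ = ⟪(B k : H), gV B d a b l⟫ := by
  by_cases hk : k < d <;> by_cases hl : l < d <;> by_cases hl2 : l < 2*d <;>
    by_cases hpar : (l - 2*d) % 2 = 1 <;>
    simp only [fV, gV, hk, hl, hl2, hpar, if_true, if_false, ite_true, ite_false,
      inner_sub_left, inner_smul_left, inner_smul_right, inner_zero_right, inner_neg_right,
      hBo, Complex.conj_ofReal]
  all_goals ((try split_ifs) <;> first | ring1 | (exfalso; omega))

set_option maxHeartbeats 1000000 in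
theorem exists_isometries (B : HilbertBasis ℕ ℂ H) (d : ℕ) {a b : ℝ}
    (ha : 0 ≤ a) (hb : 0 ≤ b) (hab : a + b = 1) :
    ∃ u v : H →L[ℂ] H,
      (∀ x, ‖u x‖ = ‖x‖) ∧ (∀ x, ‖v x‖ = ‖x‖) ∧
      adjoint u * u = 1 ∧ adjoint v * v = 1 ∧
      adjoint u * v = 0 ∧ adjoint v * u = 0 ∧
      u * adjoint u + v * adjoint v = 1 ∧
      (∀ x ∈ span ℂ (⇑B '' Set.Iio d), adjoint u x = (Real.sqrt a : ℂ) • x) ∧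
      (∀ x ∈ span ℂ (⇑B '' Set.Iio d), adjoint v x = (Real.sqrt b : ℂ) • x) := by
  classical
  have hfUon : Orthonormal ℂ (fU B d a b) := orthonormal_iff_ite.mpr (innUU B d ha hb hab)
  have hfVon : Orthonormal ℂ (fV B d a b) := orthonormal_iff_ite.mpr (innVV B d ha hb hab)
  set uL : H →ₗᵢ[ℂ] H :=
    (hfUon.orthogonalFamily.linearIsometry).comp B.repr.toLinearIsometry with huL
  set vL : H →ₗᵢ[ℂ] H :=
    (hfVon.orthogonalFamily.linearIsometry).comp B.repr.toLinearIsometry with hvL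
  set u : H →L[ℂ] H := uL.toContinuousLinearMap with hu
  set v : H →L[ℂ] H := vL.toContinuousLinearMap with hv
  have hu_apply : ∀ n : ℕ, u (B n) = fU B d a b n := by
    intro n
    show hfUon.orthogonalFamily.linearIsometry (B.repr (B n)) = _
    rw [B.repr_self, OrthogonalFamily.linearIsometry_apply_single,
      LinearIsometry.toSpanSingleton_apply, one_smul]
  have hv_apply : ∀ n : ℕ, v (B n) = fV B d a b n := by
    intro n
    show hfVon.orthogonalFamily.linearIsometry (B.repr (B n)) = _
    rw [B.repr_self, OrthogonalFamily.linearIsometry_apply_single,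
      LinearIsometry.toSpanSingleton_apply, one_smul]
  have ext_vec : ∀ {z w : H}, (∀ k : ℕ, ⟪(B k : H), z⟫ = ⟪(B k : H), w⟫) → z = w := by
    intro z w h
    apply B.repr.injective
    apply lp.ext
    funext k
    rw [B.repr_apply_apply, B.repr_apply_apply]
    exact h k
  have huadj : ∀ l : ℕ, adjoint u (B l) = gU B d a b l := by
    intro l
    apply ext_vec
    intro k
    rw [adjoint_inner_right]
    have : u (B k) = fU B d a b k := hu_apply k
    rw [this, inn_fU_B]
  have hvadj : ∀ l : ℕ, adjoint v (B l) = gV B d a b l := by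
    intro l
    apply ext_vec
    intro k
    rw [adjoint_inner_right]
    have : v (B k) = fV B d a b k := hv_apply k
    rw [this, inn_fV_B]
  have hdense : Dense (↑(span ℂ (Set.range ⇑B)) : Set H) :=
    Submodule.dense_iff_topologicalClosure_eq_top.mpr B.dense_span
  have h1 : adjoint u * u = 1 := by
    ext z
    apply ext_vec
    intro k
    rw [ContinuousLinearMap.mul_apply, adjoint_inner_right, ContinuousLinearMap.one_apply]
    exact uL.inner_map_map (B k) z
  have h2 : adjoint v * v = 1 := by
    ext z
    apply ext_vec
    intro k
    rw [ContinuousLinearMap.mul_apply, adjoint_inner_right, ContinuousLinearMap.one_apply]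
    exact vL.inner_map_map (B k) z
  have h3 : adjoint u * v = 0 := by
    apply ContinuousLinearMap.ext_on hdense
    rintro x ⟨l, rfl⟩
    rw [ContinuousLinearMap.mul_apply, ContinuousLinearMap.zero_apply, hv_apply]
    by_cases hl : l < d
    · rw [fV, if_pos hl, map_sub, map_smul, map_smul, huadj, huadj, gU, gU,
        if_pos hl, if_neg (by omega : ¬ d + l < d), if_pos (by omega : d + l < 2*d)]
      have : d + l - d = l := by omega
      rw [this, smul_smul, smul_smul, mul_comm, sub_self]
    · rw [fV, if_neg hl, huadj, gU, if_neg (by omega : ¬ 2*d + 2*(l-d) + 1 < d),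
        if_neg (by omega : ¬ 2*d + 2*(l-d) + 1 < 2*d),
        if_neg (by omega : ¬ (2*d + 2*(l-d) + 1 - 2*d) % 2 = 0)]
  have h4 : adjoint v * u = 0 := by
    apply ContinuousLinearMap.ext_on hdense
    rintro x ⟨l, rfl⟩
    rw [ContinuousLinearMap.mul_apply, ContinuousLinearMap.zero_apply, hu_apply]
    by_cases hl : l < d
    · rw [fU, if_pos hl, map_add, map_smul, map_smul, hvadj, hvadj, gV, gV,
        if_pos hl, if_neg (by omega : ¬ d + l < d), if_pos (by omega : d + l < 2*d)]
      have : d + l - d = l := by omega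
      rw [this, smul_neg, smul_smul, smul_smul, mul_comm]
      exact add_neg_cancel _
    · rw [fU, if_neg hl, hvadj, gV, if_neg (by omega : ¬ 2*d + 2*(l-d) < d),
        if_neg (by omega : ¬ 2*d + 2*(l-d) < 2*d),
        if_neg (by omega : ¬ (2*d + 2*(l-d) - 2*d) % 2 = 1)]
  have h5 : u * adjoint u + v * adjoint v = 1 := by
    apply ContinuousLinearMap.ext_on hdense
    rintro x ⟨l, rfl⟩
    rw [ContinuousLinearMap.add_apply, ContinuousLinearMap.mul_apply,
      ContinuousLinearMap.mul_apply, ContinuousLinearMap.one_apply, huadj, hvadj]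
    by_cases hl : l < d
    · rw [gU, gV, if_pos hl, if_pos hl, map_smul, map_smul, hu_apply, hv_apply,
        fU, fV, if_pos hl, if_pos hl]
      rw [smul_add, smul_sub, smul_smul, smul_smul, smul_smul, smul_smul]
      have e1 : ((Real.sqrt a : ℂ) * (Real.sqrt a : ℂ) + (Real.sqrt b : ℂ) * (Real.sqrt b : ℂ)) = 1 := by
        norm_cast
        rw [Real.mul_self_sqrt ha, Real.mul_self_sqrt hb, hab]
      calc ((Real.sqrt a:ℂ) * (Real.sqrt a:ℂ)) • (B l : H) + ((Real.sqrt a:ℂ) * (Real.sqrt b:ℂ)) • B (d + l)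
            + (((Real.sqrt b:ℂ) * (Real.sqrt b:ℂ)) • (B l : H) - ((Real.sqrt b:ℂ) * (Real.sqrt a:ℂ)) • B (d + l))
          = ((Real.sqrt a:ℂ) * (Real.sqrt a:ℂ) + (Real.sqrt b:ℂ) * (Real.sqrt b:ℂ)) • (B l : H)
            + (((Real.sqrt a:ℂ) * (Real.sqrt b:ℂ)) - ((Real.sqrt b:ℂ) * (Real.sqrt a:ℂ))) • B (d + l) := by
            rw [add_smul, sub_smul]; abel
        _ = (B l : H) := by rw [e1, mul_comm, sub_self, zero_smul, add_zero, one_smul]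
    · by_cases hl2 : l < 2*d
      · rw [gU, gV, if_neg hl, if_neg hl, if_pos hl2, if_pos hl2, map_smul, map_neg, map_smul,
          hu_apply, hv_apply, fU, fV, if_pos (by omega : l - d < d), if_pos (by omega : l - d < d)]
        have : d + (l - d) = l := by omega
        rw [this, smul_add, smul_sub, smul_smul, smul_smul, smul_smul, smul_smul]
        have e1 : ((Real.sqrt b : ℂ) * (Real.sqrt b : ℂ) + (Real.sqrt a : ℂ) * (Real.sqrt a : ℂ)) = 1 := by
          norm_cast
          rw [Real.mul_self_sqrt ha, Real.mul_self_sqrt hb]; linarith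
        calc ((Real.sqrt b:ℂ) * (Real.sqrt a:ℂ)) • (B (l-d) : H) + ((Real.sqrt b:ℂ) * (Real.sqrt b:ℂ)) • (B l : H)
              + -(((Real.sqrt a:ℂ) * (Real.sqrt b:ℂ)) • (B (l-d) : H) - ((Real.sqrt a:ℂ) * (Real.sqrt a:ℂ)) • (B l : H))
            = (((Real.sqrt b:ℂ) * (Real.sqrt a:ℂ)) - ((Real.sqrt a:ℂ) * (Real.sqrt b:ℂ))) • (B (l-d) : H)
              + (((Real.sqrt b:ℂ) * (Real.sqrt b:ℂ)) + ((Real.sqrt a:ℂ) * (Real.sqrt a:ℂ))) • (B l : H) := by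
              rw [sub_smul, add_smul]; abel
          _ = (B l : H) := by rw [e1, mul_comm, sub_self, zero_smul, zero_add, one_smul]
      · by_cases hpar : (l - 2*d) % 2 = 0
        · rw [gU, gV, if_neg hl, if_neg hl, if_neg hl2, if_neg hl2, if_pos hpar,
            if_neg (by omega : ¬ (l - 2*d) % 2 = 1), map_zero, add_zero, hu_apply,
            fU, if_neg (by omega : ¬ d + (l - 2*d)/2 < d)]
          congr 1
          omega
        · rw [gU, gV, if_neg hl, if_neg hl, if_neg hl2, if_neg hl2, if_neg hpar,
            if_pos (by omega : (l - 2*d) % 2 = 1), map_zero, zero_add, hv_apply,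
            fV, if_neg (by omega : ¬ d + (l - 2*d)/2 < d)]
          congr 1
          omega
  have h6 : ∀ x ∈ span ℂ (⇑B '' Set.Iio d), adjoint u x = (Real.sqrt a : ℂ) • x := by
    intro x hx
    induction hx using Submodule.span_induction with
    | mem x hx =>
      obtain ⟨j, hj, rfl⟩ := hx
      rw [huadj, gU, if_pos (Set.mem_Iio.mp hj)]
    | zero => simp
    | add x y _ _ hx hy => rw [map_add, hx, hy, smul_add]
    | smul c x _ hx => rw [map_smul, hx, smul_smul, smul_smul, mul_comm]
  have h7 : ∀ x ∈ span ℂ (⇑B '' Set.Iio d), adjoint v x = (Real.sqrt b : ℂ) • x := by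
    intro x hx
    induction hx using Submodule.span_induction with
    | mem x hx =>
      obtain ⟨j, hj, rfl⟩ := hx
      rw [hvadj, gV, if_pos (Set.mem_Iio.mp hj)]
    | zero => simp
    | add x y _ _ hx hy => rw [map_add, hx, hy, smul_add]
    | smul c x _ hx => rw [map_smul, hx, smul_smul, smul_smul, mul_comm]
  exact ⟨u, v, uL.norm_map, vL.norm_map, h1, h2, h3, h4, h5, h6, h7⟩

end Aux

/-- If `H` is separable and infinite-dimensional and `A` is closed under finite joins, then the
closure of `A` under uniform WOT-convergence on compacts is convex. -/
theorem stmt14 {H : Type*} [NormedAddCommGroup H] [InnerProductSpace ℂ H] [CompleteSpace H]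
    [TopologicalSpace.SeparableSpace H] (hinf : ¬ FiniteDimensional ℂ H)
    {M : Type*} [Monoid M] [TopologicalSpace M]
    (A : Set (Fcw M H)) (hA : ClosedUnderFiniteJoins A) :
    ∀ S ∈ @closure (Fcw M H) (TopologicalSpace.induced Subtype.val (kWot M H)) A,
    ∀ T ∈ @closure (Fcw M H) (TopologicalSpace.induced Subtype.val (kWot M H)) A,
    ∀ α β : ℝ, 0 ≤ α → 0 ≤ β → α + β = 1 →
    ∀ R : Fcw M H, (∀ t, R.1 t = (α : ℂ) • S.1 t + (β : ℂ) • T.1 t) →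
      R ∈ @closure (Fcw M H) (TopologicalSpace.induced Subtype.val (kWot M H)) A := by
  classical
  intro S hS T hT α β hα hβ hαβ R hR
  -- the composite embedding into the product of uniform-convergence spaces
  set P := {K : Set M // IsCompact K} × H × H with hP
  set Ψ : Fcw M H → ((p : P) → ((p.1 : Set M) →ᵤ ℂ)) := fun X p =>
    UniformFun.ofFun (fun t : (p.1 : Set M) => (inner ℂ (X.1 t.1 p.2.1) p.2.2 : ℂ)) with hΨ
  have key : ∀ X : Fcw M H,
      X ∈ @closure (Fcw M H) (TopologicalSpace.induced Subtype.val (kWot M H)) A ↔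
      Ψ X ∈ closure (Ψ '' A) := by
    intro X
    unfold kWot
    erw [induced_compose]
    exact closure_induced
  rw [key] at hS hT ⊢
  rw [mem_closure_iff_nhds] at hS hT ⊢
  intro V hV
  rw [nhds_pi, Filter.mem_pi] at hV
  obtain ⟨I, hIfin, W, hW, hIW⟩ := hV
  -- extract ε for each coordinate
  have hball : ∀ p : P, ∃ ε : ℝ, 0 < ε ∧
      ∀ g : ((p.1 : Set M) →ᵤ ℂ),
        (∀ x : (p.1 : Set M), dist (UniformFun.toFun (Ψ R p) x) (UniformFun.toFun g x) < ε) →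
        g ∈ W p := by
    intro p
    obtain ⟨U, hU, hUW⟩ := (UniformFun.hasBasis_nhds (p.1 : Set M) ℂ (Ψ R p)).mem_iff.mp (hW p)
    obtain ⟨ε, hε, hεU⟩ := Metric.mem_uniformity_dist.mp hU
    exact ⟨ε, hε, fun g hg => hUW (fun x => hεU (hg x))⟩
  choose ε hεpos hεsub using hball
  -- approximate S and T
  have hnbhd : ∀ X : Fcw M H, (Set.pi I fun p =>
      {g : ((p.1 : Set M) →ᵤ ℂ) |
        ∀ x : (p.1 : Set M), dist (UniformFun.toFun (Ψ X p) x) (UniformFun.toFun g x) < ε p})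
      ∈ 𝓝 (Ψ X) := by
    intro X
    rw [nhds_pi, Filter.mem_pi]
    refine ⟨I, hIfin, _, fun p => ?_, subset_rfl⟩
    have := (UniformFun.hasBasis_nhds (p.1 : Set M) ℂ (Ψ X p)).mem_of_mem
      (Metric.dist_mem_uniformity (hεpos p))
    exact this
  obtain ⟨y₁, hy₁, S', hS'A, rfl⟩ :
      ∃ y, y ∈ (Set.pi I fun p => {g : ((p.1 : Set M) →ᵤ ℂ) |
        ∀ x : (p.1 : Set M), dist (UniformFun.toFun (Ψ S p) x) (UniformFun.toFun g x) < ε p}) ∧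
        ∃ S' ∈ A, Ψ S' = y := by
    obtain ⟨y, hy1, hy2⟩ := hS _ (hnbhd S)
    obtain ⟨S', hS'A, rfl⟩ := hy2
    exact ⟨_, hy1, S', hS'A, rfl⟩
  obtain ⟨y₂, hy₂, T', hT'A, rfl⟩ :
      ∃ y, y ∈ (Set.pi I fun p => {g : ((p.1 : Set M) →ᵤ ℂ) |
        ∀ x : (p.1 : Set M), dist (UniformFun.toFun (Ψ T p) x) (UniformFun.toFun g x) < ε p}) ∧
        ∃ T' ∈ A, Ψ T' = y := by
    obtain ⟨y, hy1, hy2⟩ := hT _ (hnbhd T)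
    obtain ⟨T', hT'A, rfl⟩ := hy2
    exact ⟨_, hy1, T', hT'A, rfl⟩
  -- the relevant finite set of vectors
  set vecs : Finset H :=
    hIfin.toFinset.image (fun p : P => p.2.1) ∪ hIfin.toFinset.image (fun p : P => p.2.2) with hvecs
  obtain ⟨dd, B, hB⟩ := exists_adapted_basis hinf vecs
  obtain ⟨u, v, hun, hvn, h1, h2, h3, h4, h5, h6, h7⟩ := exists_isometries B dd hα hβ hαβ
  -- the join
  set UU : Fin 2 → (H →L[ℂ] H) := ![u, v] with hUU
  set TT : Fin 2 → Fcw M H := ![S', T'] with hTT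
  set JF : M → H →L[ℂ] H := fun t =>
    ∑ i : Fin 2, UU i * (TT i).1 t * ContinuousLinearMap.adjoint (UU i) with hJF
  have hJsimp : ∀ t, JF t = u * S'.1 t * ContinuousLinearMap.adjoint u +
      v * T'.1 t * ContinuousLinearMap.adjoint v := by
    intro t
    simp [hJF, Fin.sum_univ_two, hUU, hTT]
  have horth : ∀ x y : H, (inner ℂ (u x) (v y) : ℂ) = 0 := by
    intro x y
    rw [← ContinuousLinearMap.adjoint_inner_right, ← ContinuousLinearMap.mul_apply, h3,
      ContinuousLinearMap.zero_apply, inner_zero_right]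
  have hsplit : ∀ z : H, ‖ContinuousLinearMap.adjoint u z‖ ^ 2 +
      ‖ContinuousLinearMap.adjoint v z‖ ^ 2 = ‖z‖ ^ 2 := by
    intro z
    have e1 : (inner ℂ (ContinuousLinearMap.adjoint u z) (ContinuousLinearMap.adjoint u z) : ℂ) =
        inner ℂ (u (ContinuousLinearMap.adjoint u z)) z :=
      ContinuousLinearMap.adjoint_inner_right u _ z
    have e2 : (inner ℂ (ContinuousLinearMap.adjoint v z) (ContinuousLinearMap.adjoint v z) : ℂ) =
        inner ℂ (v (ContinuousLinearMap.adjoint v z)) z :=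
      ContinuousLinearMap.adjoint_inner_right v _ z
    have e3 : (inner ℂ (u (ContinuousLinearMap.adjoint u z)) z : ℂ) +
        inner ℂ (v (ContinuousLinearMap.adjoint v z)) z = inner ℂ z z := by
      rw [← ContinuousLinearMap.mul_apply, ← ContinuousLinearMap.mul_apply, ← inner_add_left,
        ← ContinuousLinearMap.add_apply, h5, ContinuousLinearMap.one_apply]
    have nu := inner_self_eq_norm_sq (𝕜 := ℂ) (ContinuousLinearMap.adjoint u z)
    have nv := inner_self_eq_norm_sq (𝕜 := ℂ) (ContinuousLinearMap.adjoint v z)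
    have nz := inner_self_eq_norm_sq (𝕜 := ℂ) z
    rw [← nu, ← nv, ← nz, ← map_add, e1, e2, e3]
  have hJnorm : ∀ t, ‖JF t‖ ≤ 1 := by
    intro t
    rw [hJsimp]
    refine ContinuousLinearMap.opNorm_le_bound _ zero_le_one (fun z => ?_)
    rw [one_mul]
    have hz2 : ‖(u * S'.1 t * ContinuousLinearMap.adjoint u +
        v * T'.1 t * ContinuousLinearMap.adjoint v) z‖ ^ 2 ≤ ‖z‖ ^ 2 := by
      rw [ContinuousLinearMap.add_apply, ContinuousLinearMap.mul_apply,
        ContinuousLinearMap.mul_apply, ContinuousLinearMap.mul_apply,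
        ContinuousLinearMap.mul_apply]
      rw [@norm_add_sq ℂ]
      rw [horth]
      simp only [map_zero, mul_zero, add_zero]
      have na : ‖u (S'.1 t (ContinuousLinearMap.adjoint u z))‖ ≤
          ‖ContinuousLinearMap.adjoint u z‖ := by
        rw [hun]
        calc ‖S'.1 t (ContinuousLinearMap.adjoint u z)‖
            ≤ ‖S'.1 t‖ * ‖ContinuousLinearMap.adjoint u z‖ := (S'.1 t).le_opNorm _
          _ ≤ 1 * ‖ContinuousLinearMap.adjoint u z‖ :=
              mul_le_mul_of_nonneg_right (S'.2.1 t) (norm_nonneg _)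
          _ = _ := one_mul _
      have nb : ‖v (T'.1 t (ContinuousLinearMap.adjoint v z))‖ ≤
          ‖ContinuousLinearMap.adjoint v z‖ := by
        rw [hvn]
        calc ‖T'.1 t (ContinuousLinearMap.adjoint v z)‖
            ≤ ‖T'.1 t‖ * ‖ContinuousLinearMap.adjoint v z‖ := (T'.1 t).le_opNorm _
          _ ≤ 1 * ‖ContinuousLinearMap.adjoint v z‖ :=
              mul_le_mul_of_nonneg_right (T'.2.1 t) (norm_nonneg _)
          _ = _ := one_mul _
      have := hsplit z
      nlinarith [norm_nonneg (u (S'.1 t (ContinuousLinearMap.adjoint u z))),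
        norm_nonneg (v (T'.1 t (ContinuousLinearMap.adjoint v z))),
        norm_nonneg (ContinuousLinearMap.adjoint u z),
        norm_nonneg (ContinuousLinearMap.adjoint v z)]
    nlinarith [norm_nonneg ((u * S'.1 t * ContinuousLinearMap.adjoint u +
      v * T'.1 t * ContinuousLinearMap.adjoint v) z), norm_nonneg z]
  have hinner : ∀ (X : H →L[ℂ] H) (ξ η : H),
      (inner ℂ ((u * X * ContinuousLinearMap.adjoint u) ξ) η : ℂ) =
      inner ℂ (X (ContinuousLinearMap.adjoint u ξ)) (ContinuousLinearMap.adjoint u η) := by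
    intro X ξ η
    rw [ContinuousLinearMap.mul_apply, ContinuousLinearMap.mul_apply,
      ← ContinuousLinearMap.adjoint_inner_right]
  have hinnerv : ∀ (X : H →L[ℂ] H) (ξ η : H),
      (inner ℂ ((v * X * ContinuousLinearMap.adjoint v) ξ) η : ℂ) =
      inner ℂ (X (ContinuousLinearMap.adjoint v ξ)) (ContinuousLinearMap.adjoint v η) := by
    intro X ξ η
    rw [ContinuousLinearMap.mul_apply, ContinuousLinearMap.mul_apply,
      ← ContinuousLinearMap.adjoint_inner_right]
  have hJcont : ∀ ξ η : H, Continuous fun t => (inner ℂ (JF t ξ) η : ℂ) := by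
    intro ξ η
    have : (fun t => (inner ℂ (JF t ξ) η : ℂ)) = fun t =>
        (inner ℂ (S'.1 t (ContinuousLinearMap.adjoint u ξ)) (ContinuousLinearMap.adjoint u η) : ℂ) +
        inner ℂ (T'.1 t (ContinuousLinearMap.adjoint v ξ)) (ContinuousLinearMap.adjoint v η) := by
      funext t
      rw [hJsimp, ContinuousLinearMap.add_apply, inner_add_left, hinner, hinnerv]
    rw [this]
    exact (S'.2.2 _ _).add (T'.2.2 _ _)
  set J : Fcw M H := ⟨JF, hJnorm, hJcont⟩ with hJ
  have hJA : J ∈ A := by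
    apply hA 2 UU ?_ ?_ TT ?_ J (fun t => rfl)
    · intro i j
      fin_cases i <;> fin_cases j
      · simpa [hUU] using h1
      · simpa [hUU] using h4
      · simpa [hUU] using h3
      · simpa [hUU] using h2
    · rw [Fin.sum_univ_two]
      simp only [hUU, Matrix.cons_val_zero, Matrix.cons_val_one, Matrix.head_cons]
      exact h5
    · intro i
      fin_cases i <;> simp only [hTT, Matrix.cons_val_zero, Matrix.cons_val_one,
        Matrix.head_cons] <;> assumption
  refine ⟨Ψ J, hIW ?_, Set.mem_image_of_mem _ hJA⟩
  intro p hp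
  apply hεsub p
  intro x
  -- membership of the vectors in the span
  have hξ : p.2.1 ∈ span ℂ (⇑B '' Set.Iio dd) := by
    apply hB
    rw [hvecs, Finset.mem_union]
    exact Or.inl (Finset.mem_image.mpr ⟨p, hIfin.mem_toFinset.mpr hp, rfl⟩)
  have hη : p.2.2 ∈ span ℂ (⇑B '' Set.Iio dd) := by
    apply hB
    rw [hvecs, Finset.mem_union]
    exact Or.inr (Finset.mem_image.mpr ⟨p, hIfin.mem_toFinset.mpr hp, rfl⟩)
  -- the inner products
  have hsc : ∀ (X : H →L[ℂ] H) (c : ℝ) (ξ η : H),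
      (inner ℂ (X ((c:ℂ) • ξ)) ((c:ℂ) • η) : ℂ) = ((c*c : ℝ) : ℂ) * inner ℂ (X ξ) η := by
    intro X c ξ η
    rw [map_smul, inner_smul_left, inner_smul_right, Complex.conj_ofReal]
    push_cast
    ring
  have hJval : (inner ℂ (JF (x : M) p.2.1) p.2.2 : ℂ) =
      (α : ℂ) * inner ℂ (S'.1 (x : M) p.2.1) p.2.2 + (β : ℂ) * inner ℂ (T'.1 (x : M) p.2.1) p.2.2 := by
    rw [hJsimp, ContinuousLinearMap.add_apply, inner_add_left, hinner, hinnerv,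
      h6 _ hξ, h6 _ hη, h7 _ hξ, h7 _ hη, hsc, hsc,
      Real.mul_self_sqrt hα, Real.mul_self_sqrt hβ]
  have hRval : (inner ℂ (R.1 (x : M) p.2.1) p.2.2 : ℂ) =
      (α : ℂ) * inner ℂ (S.1 (x : M) p.2.1) p.2.2 + (β : ℂ) * inner ℂ (T.1 (x : M) p.2.1) p.2.2 := by
    rw [hR]
    rw [ContinuousLinearMap.add_apply, inner_add_left, ContinuousLinearMap.smul_apply,
      ContinuousLinearMap.smul_apply, inner_smul_left, inner_smul_left,
      Complex.conj_ofReal, Complex.conj_ofReal]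
  -- distances
  have hdS : dist (inner ℂ (S.1 (x : M) p.2.1) p.2.2 : ℂ) (inner ℂ (S'.1 (x : M) p.2.1) p.2.2) <
      ε p := hy₁ p hp x
  have hdT : dist (inner ℂ (T.1 (x : M) p.2.1) p.2.2 : ℂ) (inner ℂ (T'.1 (x : M) p.2.1) p.2.2) <
      ε p := hy₂ p hp x
  show dist (inner ℂ (R.1 (x : M) p.2.1) p.2.2 : ℂ) (inner ℂ (JF (x : M) p.2.1) p.2.2) < ε p
  rw [hRval, hJval]
  have step1 : dist ((α : ℂ) * inner ℂ (S.1 (x : M) p.2.1) p.2.2 +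
        (β : ℂ) * inner ℂ (T.1 (x : M) p.2.1) p.2.2)
      ((α : ℂ) * inner ℂ (S'.1 (x : M) p.2.1) p.2.2 +
        (β : ℂ) * inner ℂ (T'.1 (x : M) p.2.1) p.2.2) ≤
      α * dist (inner ℂ (S.1 (x : M) p.2.1) p.2.2 : ℂ) (inner ℂ (S'.1 (x : M) p.2.1) p.2.2) +
      β * dist (inner ℂ (T.1 (x : M) p.2.1) p.2.2 : ℂ) (inner ℂ (T'.1 (x : M) p.2.1) p.2.2) := by
    refine le_trans (dist_add_add_le _ _ _ _) ?_
    apply add_le_add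
    · rw [dist_eq_norm, dist_eq_norm, ← mul_sub, norm_mul, Complex.norm_real,
        Real.norm_eq_abs, abs_of_nonneg hα]
    · rw [dist_eq_norm, dist_eq_norm, ← mul_sub, norm_mul, Complex.norm_real,
        Real.norm_eq_abs, abs_of_nonneg hβ]
  refine lt_of_le_of_lt step1 ?_
  generalize hg1 : dist (inner ℂ (S.1 (x : M) p.2.1) p.2.2 : ℂ)
    (inner ℂ (S'.1 (x : M) p.2.1) p.2.2) = dS at hdS ⊢
  generalize hg2 : dist (inner ℂ (T.1 (x : M) p.2.1) p.2.2 : ℂ)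
    (inner ℂ (T'.1 (x : M) p.2.1) p.2.2) = dT at hdT ⊢
  calc α * dS + β * dT ≤ α * max dS dT + β * max dS dT :=
        add_le_add (mul_le_mul_of_nonneg_left (le_max_left _ _) hα)
          (mul_le_mul_of_nonneg_left (le_max_right _ _) hβ)
    _ = max dS dT := by rw [← add_mul, hαβ, one_mul]
    _ < ε p := max_lt hdS hdT
end

section
/- The monoid ℝ₊^d of d-tuples of non-negative reals under coordinatewise addition is 'good': every WOT-continuous contraction-valued semigroup T : ℝ₊^d → B(H) on a separable Hilbert space is SOT-continuous. -/
theorem stmt18 {H : Type*} [NormedAddCommGroup H] [InnerProductSpace ℂ H] [CompleteSpace H]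
    [TopologicalSpace.SeparableSpace H]
    (d : ℕ) (T : (Fin d → NNReal) → H →L[ℂ] H)
    (hT0 : T 0 = 1) (hTm : ∀ s t, T (s + t) = T s * T t)
    (hc : ∀ t, ‖T t‖ ≤ 1)
    (hwot : ∀ ξ η : H, Continuous fun t => (inner ℂ (T t ξ) η : ℂ)) :
    ∀ ξ : H, Continuous fun t => T t ξ := by
  intro ξ
  have hcx : ∀ u (x : H), ‖T u x‖ ≤ ‖x‖ := fun u x => by
    calc ‖T u x‖ ≤ ‖T u‖ * ‖x‖ := (T u).le_opNorm x
    _ ≤ 1 * ‖x‖ := mul_le_mul_of_nonneg_right (hc u) (norm_nonneg x)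
    _ = ‖x‖ := one_mul _
  -- SOT continuity at 0
  have key : Filter.Tendsto (fun u => ‖T u ξ - ξ‖) (nhds 0) (nhds 0) := by
    have hsq : Filter.Tendsto (fun u => ‖T u ξ - ξ‖ ^ 2) (nhds 0) (nhds 0) := by
      have hub : Filter.Tendsto
          (fun u => 2 * ‖ξ‖ ^ 2 - 2 * (inner ℂ (T u ξ) ξ : ℂ).re) (nhds 0) (nhds 0) := by
        have hcont : Continuous fun u => 2 * ‖ξ‖ ^ 2 - 2 * (inner ℂ (T u ξ) ξ : ℂ).re :=
          continuous_const.sub (continuous_const.mul (Complex.continuous_re.comp (hwot ξ ξ)))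
        have h0 : 2 * ‖ξ‖ ^ 2 - 2 * (inner ℂ (T 0 ξ) ξ : ℂ).re = 0 := by
          have h : (inner ℂ (T 0 ξ) ξ : ℂ) = ((‖ξ‖ ^ 2 : ℝ) : ℂ) := by
            rw [hT0]
            push_cast
            simpa using inner_self_eq_norm_sq_to_K (𝕜 := ℂ) ξ
          rw [h, Complex.ofReal_re]
          ring
        simpa [h0] using hcont.tendsto 0
      refine squeeze_zero (fun u => sq_nonneg _) (fun u => ?_) hub
      have hexp := @norm_sub_sq ℂ H _ _ _ (T u ξ) ξ
      have hle : ‖T u ξ‖ ^ 2 ≤ ‖ξ‖ ^ 2 :=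
        pow_le_pow_left₀ (norm_nonneg _) (hcx u ξ) 2
      have : RCLike.re (inner ℂ (T u ξ) ξ : ℂ) = (inner ℂ (T u ξ) ξ : ℂ).re := rfl
      rw [hexp, this]
      nlinarith [hle]
    have h := (Real.continuous_sqrt.tendsto 0).comp hsq
    simpa [Function.comp_def, Real.sqrt_sq (norm_nonneg _)] using h
  rw [continuous_iff_continuousAt]
  intro t₀
  rw [ContinuousAt, tendsto_iff_dist_tendsto_zero]
  set a : (Fin d → NNReal) → (Fin d → NNReal) := fun t i => t i - min (t i) (t₀ i) with ha
  set b : (Fin d → NNReal) → (Fin d → NNReal) := fun t i => t₀ i - min (t i) (t₀ i) with hb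
  have hta : Filter.Tendsto a (nhds t₀) (nhds 0) := by
    have hconta : Continuous a := by
      apply continuous_pi
      intro i
      exact (continuous_apply i).sub ((continuous_apply i).min continuous_const)
    have ha0 : a t₀ = 0 := by
      funext i
      simp [ha]
    simpa [ha0] using hconta.tendsto t₀
  have htb : Filter.Tendsto b (nhds t₀) (nhds 0) := by
    have hcontb : Continuous b := by
      apply continuous_pi
      intro i
      exact continuous_const.sub ((continuous_apply i).min continuous_const)
    have hb0 : b t₀ = 0 := by
      funext i
      simp [hb]
    simpa [hb0] using hcontb.tendsto t₀
  refine squeeze_zero (fun t => dist_nonneg)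
    (g := fun t => ‖T (a t) ξ - ξ‖ + ‖T (b t) ξ - ξ‖) (fun t => ?_) ?_
  · -- the bound
    set m : Fin d → NNReal := fun i => min (t i) (t₀ i) with hm
    have h1 : T t = T m * T (a t) := by
      rw [← hTm]
      congr 1
      funext i
      show t i = m i + a t i
      exact (add_tsub_cancel_of_le (min_le_left (t i) (t₀ i))).symm
    have h2 : T t₀ = T m * T (b t) := by
      rw [← hTm]
      congr 1
      funext i
      show t₀ i = m i + b t i
      exact (add_tsub_cancel_of_le (min_le_right (t i) (t₀ i))).symm
    have : dist (T t ξ) (T t₀ ξ) = ‖T m (T (a t) ξ - T (b t) ξ)‖ := by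
      rw [dist_eq_norm, h1, h2]
      simp [ContinuousLinearMap.mul_apply, map_sub]
    rw [this]
    calc ‖T m (T (a t) ξ - T (b t) ξ)‖ ≤ ‖T (a t) ξ - T (b t) ξ‖ := hcx m _
    _ ≤ ‖T (a t) ξ - ξ‖ + ‖T (b t) ξ - ξ‖ := by
        have h := dist_triangle_right (T (a t) ξ) (T (b t) ξ) ξ
        simpa [dist_eq_norm] using h
  · have h1 := key.comp hta
    have h2 := key.comp htb
    simpa using h1.add h2
end
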